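/- Let F(x,y) = ax + by + (higher order terms) ∈ ℂ_p[[x,y]] be a convergent power series on the polydisk D = {|x| ≤ δ, |y| ≤ δ} with F(0,0) = 0 and b ≠ 0. Then there exist δ' with 0 < δ' ≤ δ and a power series g(x) ∈ ℂ_p[[x]] convergent for |x| ≤ δ', with g(0) = 0, such that for all (x,y) with |x| ≤ δ' and |y| ≤ δ', F(x,y) = 0 if and only if y = g(x). -/

import Mathlib

/-- Evaluation of the two-variable power series with coefficients `a` at `(x, y)`. -/
noncomputable def evalPS2 {K : Type*} [NormedField K] (a : ℕ → ℕ → K) (x y : K) : K :=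
  ∑' ij : ℕ × ℕ, a ij.1 ij.2 * x ^ ij.1 * y ^ ij.2

/-- Evaluation of the one-variable power series with coefficients `c` at `x`. -/
noncomputable def evalPS1 {K : Type*} [NormedField K] (c : ℕ → K) (x : K) : K :=
  ∑' n : ℕ, c n * x ^ n

section NIFTAux

open Finset

variable {K : Type*} [NormedField K]

/-- Coefficients of the `j`-th power of the power series with coefficients `c`. -/
noncomputable def dANIFT (c : ℕ → K) : ℕ → ℕ → K
  | 0 => fun n => if n = 0 then 1 else 0
  | (j+1) => fun n => ∑ kl ∈ Finset.HasAntidiagonal.antidiagonal n, c kl.1 * dANIFT c j kl.2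

lemma dANIFT_zero (c : ℕ → K) (n : ℕ) : dANIFT c 0 n = if n = 0 then 1 else 0 := rfl

lemma dANIFT_succ (c : ℕ → K) (j n : ℕ) :
    dANIFT c (j+1) n = ∑ kl ∈ Finset.HasAntidiagonal.antidiagonal n, c kl.1 * dANIFT c j kl.2 := rfl

lemma dANIFT_one (c : ℕ → K) (n : ℕ) : dANIFT c 1 n = c n := by
  rw [dANIFT_succ]
  rw [Finset.sum_eq_single (n, 0)]
  · simp [dANIFT_zero]
  · rintro ⟨k, l⟩ hkl hne
    have h := Finset.HasAntidiagonal.mem_antidiagonal.mp hkl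
    have : l ≠ 0 := by
      rintro rfl
      simp only [add_zero] at h
      exact hne (by rw [h])
    simp [dANIFT_zero, this]
  · intro h
    exact absurd (Finset.HasAntidiagonal.mem_antidiagonal.mpr (by omega)) h

lemma dANIFT_eq_zero (c : ℕ → K) (hc0 : c 0 = 0) : ∀ j n, n < j → dANIFT c j n = 0 := by
  intro j
  induction j with
  | zero => intro n h; omega
  | succ j ih =>
    intro n h
    rw [dANIFT_succ]
    apply Finset.sum_eq_zero
    rintro ⟨k, l⟩ hkl
    have h' := Finset.HasAntidiagonal.mem_antidiagonal.mp hkl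
    rcases Nat.eq_zero_or_pos k with rfl | hk
    · simp [hc0]
    · have : l < j := by omega
      simp [ih l this]

lemma dANIFT_congr (c c' : ℕ → K) (hc0 : c 0 = 0) (hc0' : c' 0 = 0) :
    ∀ j n, (∀ k, k ≤ n + 1 - j → c k = c' k) → dANIFT c j n = dANIFT c' j n := by
  intro j
  induction j with
  | zero => intro n _; rfl
  | succ j ih =>
    intro n h
    rw [dANIFT_succ, dANIFT_succ]
    apply Finset.sum_congr rfl
    rintro ⟨k, l⟩ hkl
    have h' := Finset.HasAntidiagonal.mem_antidiagonal.mp hkl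
    rcases Nat.eq_zero_or_pos k with rfl | hk
    · simp [hc0, hc0']
    · rcases lt_or_ge l j with hl | hl
      · rw [dANIFT_eq_zero c hc0 j l hl, dANIFT_eq_zero c' hc0' j l hl, mul_zero, mul_zero]
      · have hck : c k = c' k := h k (by omega)
        have heq : dANIFT c j l = dANIFT c' j l := ih l (fun m hm => h m (by omega))
        rw [hck, heq]

lemma dANIFT_norm_le [IsUltrametricDist K] (c : ℕ → K) (hc0 : c 0 = 0) {A B : ℝ}
    (hA : 0 ≤ A) (hB : 0 ≤ B) :
    ∀ j n, j ≤ n → (∀ k, 1 ≤ k → k + j ≤ n + 1 → ‖c k‖ ≤ A * B ^ (k - 1)) →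
      ‖dANIFT c j n‖ ≤ A ^ j * B ^ (n - j) := by
  intro j
  induction j with
  | zero =>
    intro n _ _
    rw [dANIFT_zero]
    rcases eq_or_ne n 0 with rfl | hn
    · simp
    · simp only [hn, if_false, norm_zero]
      positivity
  | succ j ih =>
    intro n hjn h
    rw [dANIFT_succ]
    apply IsUltrametricDist.norm_sum_le_of_forall_le_of_nonneg (by positivity)
    rintro ⟨k, l⟩ hkl
    have h' := Finset.HasAntidiagonal.mem_antidiagonal.mp hkl
    rcases Nat.eq_zero_or_pos k with rfl | hk
    · simp only [hc0, zero_mul, norm_zero]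
      positivity
    · rcases lt_or_ge l j with hl | hl
      · simp only [dANIFT_eq_zero c hc0 j l hl, mul_zero, norm_zero]
        positivity
      · have hck : ‖c k‖ ≤ A * B ^ (k - 1) := h k hk (by omega)
        have hdl : ‖dANIFT c j l‖ ≤ A ^ j * B ^ (l - j) :=
          ih l hl (fun m hm hml => h m hm (by omega))
        calc ‖c k * dANIFT c j l‖ = ‖c k‖ * ‖dANIFT c j l‖ := norm_mul _ _
          _ ≤ (A * B ^ (k - 1)) * (A ^ j * B ^ (l - j)) := by
              apply mul_le_mul hck hdl (norm_nonneg _) (by positivity)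
          _ = A ^ (j + 1) * B ^ (n - (j + 1)) := by
              have h1 : (k - 1) + (l - j) = n - (j + 1) := by omega
              rw [← h1, pow_add]
              ring

/-- Stages of the recursively defined solution coefficients. -/
noncomputable def cANIFT (a : ℕ → ℕ → K) : ℕ → (ℕ → K)
  | 0 => fun _ => 0
  | (N+1) => fun n =>
      if n = N + 1 then
        -(a 0 1)⁻¹ * ∑ ij ∈ range (N+2) ×ˢ range (N+2),
          (if ij = (0,1) then 0 else a ij.1 ij.2 * dANIFT (cANIFT a N) ij.2 (N+1 - ij.1))
      else cANIFT a N n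

/-- The solution coefficients. -/
noncomputable def ccNIFT (a : ℕ → ℕ → K) (n : ℕ) : K := cANIFT a n n

lemma cANIFT_eq_of_le (a : ℕ → ℕ → K) :
    ∀ M N n : ℕ, n ≤ N → N ≤ M → cANIFT a M n = cANIFT a N n := by
  intro M
  induction M with
  | zero =>
    intro N n h1 h2
    obtain rfl : N = 0 := by omega
    rfl
  | succ M ih =>
    intro N n h1 h2
    rcases eq_or_ne N (M+1) with rfl | hne
    · rfl
    · have hNM : N ≤ M := by omega
      have hn : n ≠ M + 1 := by omega
      show (if n = M + 1 then _ else cANIFT a M n) = _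
      rw [if_neg hn, ih N n h1 hNM]

lemma ccNIFT_eq (a : ℕ → ℕ → K) {N n : ℕ} (h : n ≤ N) : cANIFT a N n = ccNIFT a n :=
  cANIFT_eq_of_le a N n n le_rfl h

lemma ccNIFT_zero (a : ℕ → ℕ → K) : ccNIFT a 0 = 0 := rfl

lemma ccNIFT_spec (a : ℕ → ℕ → K) (h00 : a 0 0 = 0) (hb : a 0 1 ≠ 0) (n : ℕ) :
    ∑ ij ∈ range (n+1) ×ˢ range (n+1),
      a ij.1 ij.2 * dANIFT (ccNIFT a) ij.2 (n - ij.1) = 0 := by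
  set c : ℕ → K := ccNIFT a with hc
  have hc0 : c 0 = 0 := ccNIFT_zero a
  rcases Nat.eq_zero_or_pos n with rfl | hn
  · simp only [zero_add, range_one, Finset.singleton_product_singleton, Finset.sum_singleton]
    simp [dANIFT_zero, h00]
  obtain ⟨N, rfl⟩ : ∃ N, n = N + 1 := ⟨n - 1, by omega⟩
  set s : Finset (ℕ × ℕ) := range (N+2) ×ˢ range (N+2) with hs
  set f : ℕ × ℕ → K := fun ij => a ij.1 ij.2 * dANIFT c ij.2 (N + 1 - ij.1) with hf
  have hmem : ((0,1) : ℕ × ℕ) ∈ s := by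
    simp [hs, Finset.mem_product]
  have hcval : c (N+1) = -(a 0 1)⁻¹ * ∑ ij ∈ s,
      (if ij = (0,1) then 0 else f ij) := by
    have h1 : c (N+1) = cANIFT a (N+1) (N+1) := rfl
    rw [h1]
    show (if N + 1 = N + 1 then _ else _) = _
    rw [if_pos rfl]
    congr 1
    apply Finset.sum_congr rfl
    rintro ⟨i, j⟩ hij
    rcases eq_or_ne ((i,j) : ℕ × ℕ) (0,1) with h | h
    · rw [if_pos h, if_pos h]
    · rw [if_neg h, if_neg h]
      congr 1
      rcases Nat.eq_zero_or_pos j with rfl | hj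
      · rfl
      · have hij2 : i + j ≥ 2 := by
          rcases Nat.eq_zero_or_pos i with rfl | hi
          · have : j ≠ 1 := fun hj1 => h (by rw [hj1])
            omega
          · omega
        apply dANIFT_congr
        · rw [ccNIFT_eq a (Nat.zero_le N)]; exact hc0
        · exact hc0
        · intro k hk
          have hkN : k ≤ N := by omega
          rw [ccNIFT_eq a hkN]
  have hsplit : ∑ ij ∈ s, f ij = f (0,1) + ∑ ij ∈ s.erase (0,1), f ij :=
    (Finset.add_sum_erase s f hmem).symm
  have hite : ∑ ij ∈ s, (if ij = (0,1) then 0 else f ij) = ∑ ij ∈ s.erase (0,1), f ij := by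
    rw [← Finset.sum_erase s (by simp : (if ((0,1) : ℕ × ℕ) = (0,1) then (0:K) else f (0,1)) = 0)]
    apply Finset.sum_congr rfl
    intro ij hij
    rw [if_neg (Finset.ne_of_mem_erase hij)]
  have hf01 : f (0,1) = a 0 1 * c (N+1) := by
    simp only [hf, Nat.sub_zero]
    rw [dANIFT_one]
  rw [hsplit, hf01, hcval, hite]
  field_simp
  ring

lemma keyineq0NIFT {C β δ A B : ℝ} (hβ : 0 < β) (hδ : 0 < δ)
    (hA1 : 1 ≤ A) (hCA : C ≤ β * δ * A) (hB : B = A^2/δ) :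
    ∀ n : ℕ, 1 ≤ n → C/δ^n ≤ β * (A * B^(n-1)) := by
  intro n hn
  have hA0 : (0:ℝ) < A := lt_of_lt_of_le one_pos hA1
  rw [hB, div_pow, ← pow_mul]
  have e2 : β * (A * (A^(2*(n-1))/δ^(n-1))) = (β * (A * A^(2*(n-1))))/δ^(n-1) := by ring
  rw [e2, div_le_div_iff₀ (by positivity) (by positivity)]
  have e3 : δ^n = δ^(n-1) * δ := by rw [← pow_succ]; congr 1; omega
  have h4 : C ≤ β * δ * (A * A^(2*(n-1))) := by
    calc C ≤ β * δ * A := hCA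
      _ = β * δ * (A * A^0) := by ring
      _ ≤ β * δ * (A * A^(2*(n-1))) := by
          have : (A:ℝ)^0 ≤ A^(2*(n-1)) := pow_le_pow_right₀ hA1 (by omega)
          have hβδ : (0:ℝ) ≤ β * δ * A := by positivity
          nlinarith [pow_nonneg hA0.le (2*(n-1))]
  calc C * δ^(n-1) ≤ (β * δ * (A * A^(2*(n-1)))) * δ^(n-1) :=
        mul_le_mul_of_nonneg_right h4 (by positivity)
    _ = β * (A * A^(2*(n-1))) * (δ^(n-1) * δ) := by ring
    _ = β * (A * A^(2*(n-1))) * δ^n := by rw [← e3]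

lemma keyineq1NIFT {C β δ A B : ℝ} (hβ : 0 < β) (hδ : 0 < δ)
    (hA1 : 1 ≤ A) (hCA : C ≤ β * δ * A) (hB : B = A^2/δ) :
    ∀ i j n : ℕ, 1 ≤ j → 2 ≤ i + j → i + j ≤ n →
      C/δ^(i+j) * (A^j * B^(n-i-j)) ≤ β * (A * B^(n-1)) := by
  intro i j n hj hs hn
  have hA0 : (0:ℝ) < A := lt_of_lt_of_le one_pos hA1
  have hB0 : (0:ℝ) < B := by rw [hB]; positivity
  set s := i + j with hsdef
  have key : C/δ^s * A^j ≤ β * (A * B^(s-1)) := by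
    rw [hB, div_pow, ← pow_mul]
    have e1 : C/δ^s * A^j = (C * A^j)/δ^s := by ring
    have e2 : β * (A * (A^(2*(s-1))/δ^(s-1))) = (β * (A * A^(2*(s-1))))/δ^(s-1) := by ring
    rw [e1, e2, div_le_div_iff₀ (by positivity) (by positivity)]
    have e3 : δ^s = δ^(s-1) * δ := by rw [← pow_succ]; congr 1; omega
    have h4 : C * A^j ≤ β * δ * (A * A^(2*(s-1))) := by
      calc C * A^j ≤ (β * δ * A) * A^j :=
            mul_le_mul_of_nonneg_right hCA (pow_nonneg hA0.le j)
        _ = β * δ * A^(j+1) := by ring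
        _ ≤ β * δ * A^(2*(s-1)+1) := by
            exact mul_le_mul_of_nonneg_left
              (pow_le_pow_right₀ hA1 (show j+1 ≤ 2*(s-1)+1 by omega)) (by positivity)
        _ = β * δ * (A * A^(2*(s-1))) := by ring
    calc C * A^j * δ^(s-1) ≤ (β * δ * (A * A^(2*(s-1)))) * δ^(s-1) :=
          mul_le_mul_of_nonneg_right h4 (by positivity)
      _ = β * (A * A^(2*(s-1))) * (δ^(s-1) * δ) := by ring
      _ = β * (A * A^(2*(s-1))) * δ^s := by rw [← e3]
  have h1 : n - i - j = n - s := by omega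
  have h2 : B^(n-1) = B^(s-1) * B^(n-s) := by rw [← pow_add]; congr 1; omega
  rw [h1, h2]
  calc C/δ^s * (A^j * B^(n-s)) = (C/δ^s * A^j) * B^(n-s) := by ring
    _ ≤ (β * (A * B^(s-1))) * B^(n-s) := mul_le_mul_of_nonneg_right key (by positivity)
    _ = β * (A * (B^(s-1) * B^(n-s))) := by ring

lemma ccNIFT_norm_le [IsUltrametricDist K] (a : ℕ → ℕ → K) (h00 : a 0 0 = 0) (hb : a 0 1 ≠ 0)
    {C δ A B : ℝ} (hδ : 0 < δ) (ha : ∀ i j, ‖a i j‖ ≤ C/δ^(i+j))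
    (hA1 : 1 ≤ A) (hCA : C ≤ ‖a 0 1‖ * δ * A) (hB : B = A^2/δ) :
    ∀ n, 1 ≤ n → ‖ccNIFT a n‖ ≤ A * B^(n-1) := by
  set β := ‖a 0 1‖ with hβdef
  have hβ : 0 < β := norm_pos_iff.mpr hb
  have hA0 : (0:ℝ) < A := lt_of_lt_of_le one_pos hA1
  have hB0 : (0:ℝ) < B := by rw [hB]; positivity
  set c : ℕ → K := ccNIFT a with hc
  have hc0 : c 0 = 0 := ccNIFT_zero a
  intro n
  induction n using Nat.strong_induction_on with
  | _ n IH =>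
  intro hn
  set s : Finset (ℕ × ℕ) := range (n+1) ×ˢ range (n+1) with hs
  set f : ℕ × ℕ → K := fun ij => a ij.1 ij.2 * dANIFT c ij.2 (n - ij.1) with hf
  have hmem : ((0,1) : ℕ × ℕ) ∈ s := by
    simp only [hs, Finset.mem_product, Finset.mem_range]
    omega
  have hspec : ∑ ij ∈ s, f ij = 0 := ccNIFT_spec a h00 hb n
  have hsplit : f (0,1) + ∑ ij ∈ s.erase (0,1), f ij = 0 := by
    rw [Finset.add_sum_erase s f hmem]; exact hspec
  have hf01 : f (0,1) = a 0 1 * c n := by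
    simp only [hf, Nat.sub_zero]; rw [dANIFT_one]
  have heq : β * ‖c n‖ = ‖∑ ij ∈ s.erase (0,1), f ij‖ := by
    have : a 0 1 * c n = -∑ ij ∈ s.erase (0,1), f ij := by
      rw [← hf01]; linear_combination hsplit
    rw [← norm_mul, this, norm_neg]
  have hbound : ‖∑ ij ∈ s.erase (0,1), f ij‖ ≤ β * (A * B^(n-1)) := by
    apply IsUltrametricDist.norm_sum_le_of_forall_le_of_nonneg (by positivity)
    rintro ⟨i, j⟩ hij
    have hijne : ((i,j) : ℕ × ℕ) ≠ (0,1) := Finset.ne_of_mem_erase hij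
    have hijs : ((i,j) : ℕ × ℕ) ∈ s := Finset.mem_of_mem_erase hij
    have hin : i ≤ n ∧ j ≤ n := by
      simpa only [hs, Finset.mem_product, Finset.mem_range, Nat.lt_succ_iff] using hijs
    rcases Nat.eq_zero_or_pos j with rfl | hj
    · rcases eq_or_ne i n with hin' | hin'
      · subst hin'
        have : f (i, 0) = a i 0 := by
          simp only [hf]
          rw [Nat.sub_self, dANIFT_zero, if_pos rfl, mul_one]
        rw [this]
        calc ‖a i 0‖ ≤ C/δ^(i+0) := ha i 0
          _ = C/δ^i := by rw [Nat.add_zero]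
          _ ≤ β * (A * B^(i-1)) := keyineq0NIFT hβ hδ hA1 hCA hB i (by omega)
      · have : f (i, 0) = 0 := by
          simp only [hf]
          rw [dANIFT_zero, if_neg (by omega), mul_zero]
        rw [this, norm_zero]; positivity
    · have hij2 : 2 ≤ i + j := by
        rcases Nat.eq_zero_or_pos i with rfl | hi
        · have : j ≠ 1 := fun h => hijne (by rw [h])
          omega
        · omega
      rcases Nat.lt_or_ge (n - i) j with hlt | hge
      · have : f (i, j) = 0 := by
          simp only [hf]
          rw [dANIFT_eq_zero c hc0 j (n - i) hlt, mul_zero]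
        rw [this, norm_zero]; positivity
      · have hijn : i + j ≤ n := by omega
        have hd : ‖dANIFT c j (n - i)‖ ≤ A^j * B^((n-i)-j) := by
          apply dANIFT_norm_le c hc0 hA0.le hB0.le j (n-i) hge
          intro k hk hkle
          have hkn : k < n := by omega
          exact IH k hkn hk
        calc ‖f (i, j)‖ = ‖a i j‖ * ‖dANIFT c j (n - i)‖ := norm_mul _ _
          _ ≤ (C/δ^(i+j)) * (A^j * B^((n-i)-j)) := by
              have hC0 : (0:ℝ) ≤ C := le_trans (norm_nonneg (a 0 0)) (by simpa using ha 0 0)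
              exact mul_le_mul (ha i j) hd (norm_nonneg _) (div_nonneg hC0 (by positivity))
          _ = (C/δ^(i+j)) * (A^j * B^(n-i-j)) := by rw [Nat.sub_sub]
          _ ≤ β * (A * B^(n-1)) := keyineq1NIFT hβ hδ hA1 hCA hB i j n hj hij2 hijn
  have h2 := heq.trans_le hbound
  exact le_of_mul_le_mul_left h2 hβ

lemma ultNormTsumLe {E : Type*} [SeminormedAddCommGroup E] [IsUltrametricDist E]
    {ι : Type*} (f : ι → E) {M : ℝ} (hM : 0 ≤ M) (h : ∀ i, ‖f i‖ ≤ M) :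
    ‖∑' i, f i‖ ≤ M := by
  by_cases hf : Summable f
  · refine le_of_tendsto hf.hasSum.norm ?_
    exact Filter.Eventually.of_forall fun s =>
      IsUltrametricDist.norm_sum_le_of_forall_le_of_nonneg hM fun i _ => h i
  · rw [tsum_eq_zero_of_not_summable hf, norm_zero]; exact hM

lemma sumgeom2NIFT {M θ : ℝ} (hM : 0 ≤ M) (hθ0 : 0 ≤ θ) (hθ1 : θ < 1) :
    Summable (fun ij : ℕ × ℕ => (M * θ^ij.1) * θ^ij.2) :=
  Summable.mul_of_nonneg ((summable_geometric_of_lt_one hθ0 hθ1).mul_left M)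
    (summable_geometric_of_lt_one hθ0 hθ1) (fun i => by positivity) (fun j => pow_nonneg hθ0 j)

lemma sumgeom3NIFT {M θ : ℝ} (hM : 0 ≤ M) (hθ0 : 0 ≤ θ) (hθ1 : θ < 1) :
    Summable (fun p : (ℕ × ℕ) × ℕ => ((M * θ^p.1.1) * θ^p.1.2) * θ^p.2) :=
  Summable.mul_of_nonneg (sumgeom2NIFT hM hθ0 hθ1)
    (summable_geometric_of_lt_one hθ0 hθ1)
    (fun ij => by positivity) (fun n => pow_nonneg hθ0 n)

lemma dANIFT_eval [CompleteSpace K] (c : ℕ → K) (x : K)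
    (h : Summable fun n => ‖c n * x^n‖) : ∀ j : ℕ,
    (Summable fun n => ‖dANIFT c j n * x^n‖) ∧
    ∑' n, dANIFT c j n * x^n = (∑' n, c n * x^n)^j := by
  intro j
  induction j with
  | zero =>
    constructor
    · apply summable_of_ne_finset_zero (s := ({0} : Finset ℕ))
      intro n hn
      simp only [Finset.mem_singleton] at hn
      simp [dANIFT_zero, hn]
    · rw [tsum_eq_single 0 (fun n hn => by simp [dANIFT_zero, hn])]
      simp [dANIFT_zero]
  | succ j ih =>
    have key : ∀ n : ℕ, ∑ kl ∈ Finset.HasAntidiagonal.antidiagonal n,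
        (c kl.1 * x^kl.1) * (dANIFT c j kl.2 * x^kl.2) = dANIFT c (j+1) n * x^n := by
      intro n
      rw [dANIFT_succ, Finset.sum_mul]
      apply Finset.sum_congr rfl
      rintro ⟨k, l⟩ hkl
      have hkl' := Finset.HasAntidiagonal.mem_antidiagonal.mp hkl
      simp only
      rw [← hkl', pow_add]
      ring
    constructor
    · have hsummable := summable_norm_sum_mul_antidiagonal_of_summable_norm h ih.1
      apply Summable.congr hsummable
      intro n
      rw [key n]
    · have heq := tsum_mul_tsum_eq_tsum_sum_antidiagonal_of_summable_norm h ih.1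
      calc ∑' n, dANIFT c (j+1) n * x^n
          = ∑' n, ∑ kl ∈ Finset.HasAntidiagonal.antidiagonal n, (c kl.1 * x^kl.1) * (dANIFT c j kl.2 * x^kl.2) :=
            tsum_congr (fun n => (key n).symm)
        _ = (∑' n, c n * x^n) * (∑' n, dANIFT c j n * x^n) := heq.symm
        _ = (∑' n, c n * x^n) * (∑' n, c n * x^n)^j := by rw [ih.2]
        _ = (∑' n, c n * x^n)^(j+1) := by rw [pow_succ]; ring

end NIFTAux

set_option maxHeartbeats 2000000 in
/-- non-archimedean implicit function theorem: if
`F(x,y) = Σ a_{ij} x^i y^j` converges on the closed polydisk of radius `δ`,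
`F(0,0) = 0` and the coefficient `b = a₀₁` of `y` is nonzero, then there are
`0 < δ' ≤ δ` and a power series `g` convergent on `|x| ≤ δ'` with `g(0) = 0`
such that for `|x|, |y| ≤ δ'` one has `F(x,y) = 0 ↔ y = g(x)`. -/
theorem nonarch_implicit_function_theorem
    {p : ℕ} [Fact p.Prime] (ℂp : Type*) [NormedField ℂp] [CompleteSpace ℂp]
    [IsAlgClosed ℂp] [IsUltrametricDist ℂp] [Algebra ℚ_[p] ℂp]
    (hnorm : ∀ a : ℚ_[p], ‖algebraMap ℚ_[p] ℂp a‖ = ‖a‖)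
    (hdense : Dense {x : ℂp | IsAlgebraic ℚ_[p] x})
    (a : ℕ → ℕ → ℂp) (δ : ℝ) (hδ : 0 < δ)
    (hconv : Filter.Tendsto (fun ij : ℕ × ℕ => ‖a ij.1 ij.2‖ * δ ^ (ij.1 + ij.2))
      Filter.cofinite (nhds 0))
    (h00 : a 0 0 = 0) (hb : a 0 1 ≠ 0) :
    ∃ δ' : ℝ, 0 < δ' ∧ δ' ≤ δ ∧ ∃ c : ℕ → ℂp,
      Filter.Tendsto (fun n : ℕ => ‖c n‖ * δ' ^ n) Filter.atTop (nhds 0) ∧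
      c 0 = 0 ∧
      ∀ x y : ℂp, ‖x‖ ≤ δ' → ‖y‖ ≤ δ' →
        (evalPS2 a x y = 0 ↔ y = evalPS1 c x) := by
  classical
  -- ## A uniform bound on the coefficients
  have h1 : ∀ᶠ ij : ℕ × ℕ in Filter.cofinite, ‖a ij.1 ij.2‖ * δ ^ (ij.1 + ij.2) < 1 :=
    hconv.eventually_lt_const one_pos
  have hfin : {ij : ℕ × ℕ | ¬ (‖a ij.1 ij.2‖ * δ ^ (ij.1 + ij.2) < 1)}.Finite := by
    simpa [Filter.eventually_cofinite] using h1
  set T : Finset (ℕ × ℕ) := hfin.toFinset with hT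
  set C : ℝ := 1 + ∑ ij ∈ T, ‖a ij.1 ij.2‖ * δ ^ (ij.1 + ij.2) with hCdef
  have hsum_nonneg : (0:ℝ) ≤ ∑ ij ∈ T, ‖a ij.1 ij.2‖ * δ ^ (ij.1 + ij.2) :=
    Finset.sum_nonneg fun ij _ => by positivity
  have hC1 : (1:ℝ) ≤ C := by rw [hCdef]; linarith
  have hC0 : (0:ℝ) < C := lt_of_lt_of_le one_pos hC1
  have hCb : ∀ i j : ℕ, ‖a i j‖ * δ ^ (i + j) ≤ C := by
    intro i j
    by_cases h : ‖a i j‖ * δ ^ (i + j) < 1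
    · linarith
    · have hmem : ((i,j) : ℕ × ℕ) ∈ T := by
        rw [hT, Set.Finite.mem_toFinset]
        exact h
      have := Finset.single_le_sum (f := fun ij : ℕ × ℕ => ‖a ij.1 ij.2‖ * δ ^ (ij.1 + ij.2))
        (fun ij _ => by positivity) hmem
      simp only at this
      rw [hCdef]; linarith
  have hCd : ∀ i j : ℕ, ‖a i j‖ ≤ C / δ ^ (i + j) := by
    intro i j
    rw [le_div_iff₀ (pow_pos hδ _)]
    exact hCb i j
  -- ## Constants
  set β : ℝ := ‖a 0 1‖ with hβdef
  have hβ : 0 < β := norm_pos_iff.mpr hb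
  set A : ℝ := 1 + C/δ + C/(β*δ) with hAdef
  have hA1 : (1:ℝ) ≤ A := by
    have : (0:ℝ) ≤ C/δ := by positivity
    have : (0:ℝ) ≤ C/(β*δ) := by positivity
    rw [hAdef]; linarith
  have hA0 : (0:ℝ) < A := lt_of_lt_of_le one_pos hA1
  have hCA : C ≤ β * δ * A := by
    have hexp : β * δ * A = β * δ + β * C + C := by
      rw [hAdef]; field_simp
    have h1 : (0:ℝ) < β * δ := by positivity
    have h2 : (0:ℝ) ≤ β * C := by positivity
    rw [hexp]; linarith
  set B : ℝ := A^2/δ with hBdef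
  have hB0 : (0:ℝ) < B := by rw [hBdef]; positivity
  -- ## The solution coefficients and their bound
  set c : ℕ → ℂp := ccNIFT a with hcdef
  have hc0 : c 0 = 0 := ccNIFT_zero a
  have hcb : ∀ n, 1 ≤ n → ‖c n‖ ≤ A * B^(n-1) :=
    ccNIFT_norm_le a h00 hb hδ hCd hA1 hCA hBdef
  -- ## Choice of the radius
  set δ' : ℝ := min (δ/4) (min (1/(4*B)) (min (δ/(4*A)) (β*δ^2/(2*C*A)))) with hδ'def
  have hδ'0 : 0 < δ' := by
    rw [hδ'def]
    refine lt_min (by positivity) (lt_min (by positivity) (lt_min (by positivity) (by positivity)))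
  have hδ'δ4 : δ' ≤ δ/4 := min_le_left _ _
  have hδ'δ : δ' ≤ δ := by linarith
  have hBδ' : B * δ' ≤ 1/4 := by
    have h : δ' ≤ 1/(4*B) := le_trans (min_le_right _ _) (min_le_left _ _)
    calc B * δ' ≤ B * (1/(4*B)) := mul_le_mul_of_nonneg_left h hB0.le
      _ = 1/4 := by field_simp
  have hAδ' : A * δ' ≤ δ/4 := by
    have h : δ' ≤ δ/(4*A) := le_trans (min_le_right _ _) (le_trans (min_le_right _ _)
      (min_le_left _ _))
    calc A * δ' ≤ A * (δ/(4*A)) := mul_le_mul_of_nonneg_left h hA0.le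
      _ = δ/4 := by field_simp
  have hCAδ' : C * (A * δ') ≤ β*δ^2/2 := by
    have h : δ' ≤ β*δ^2/(2*C*A) := le_trans (min_le_right _ _) (le_trans (min_le_right _ _)
      (min_le_right _ _))
    calc C * (A * δ') ≤ C * (A * (β*δ^2/(2*C*A))) := by
          apply mul_le_mul_of_nonneg_left (mul_le_mul_of_nonneg_left h hA0.le) hC0.le
      _ = β*δ^2/2 := by field_simp
  set r : ℝ := A * δ' with hrdef
  have hr0 : 0 < r := by positivity
  have hδ'r : δ' ≤ r := by
    calc δ' = 1 * δ' := (one_mul _).symm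
      _ ≤ A * δ' := mul_le_mul_of_nonneg_right hA1 hδ'0.le
  have hrδ4 : r ≤ δ/4 := hAδ'
  have hrδ : r ≤ δ := by linarith
  -- ratio bounds
  have hratio1 : δ'/δ ≤ 1/4 := by rw [div_le_div_iff₀ hδ (by norm_num)]; linarith
  have hratio2 : r/δ ≤ 1/4 := by rw [div_le_div_iff₀ hδ (by norm_num)]; linarith
  -- ## Geometric bound on the coefficients
  have hkey : ∀ n, 1 ≤ n → ‖c n‖ * δ'^n ≤ r * (B*δ')^(n-1) := by
    intro n hn
    have e1 : δ'^n = δ' * δ'^(n-1) := by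
      rw [← pow_succ']; congr 1; omega
    calc ‖c n‖ * δ'^n ≤ (A * B^(n-1)) * δ'^n :=
          mul_le_mul_of_nonneg_right (hcb n hn) (by positivity)
      _ = r * (B*δ')^(n-1) := by
          rw [e1, mul_pow, hrdef]; ring
  have hgeo4 : ∀ n : ℕ, (B*δ')^n ≤ (1/4:ℝ)^n := fun n =>
    pow_le_pow_left₀ (by positivity) hBδ' n
  -- coefficient tendsto
  have htendsto : Filter.Tendsto (fun n : ℕ => ‖c n‖ * δ'^n) Filter.atTop (nhds 0) := by
    apply squeeze_zero (fun n => by positivity) (g := fun n : ℕ => (4*r) * (1/4:ℝ)^n)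
    · intro n
      rcases Nat.eq_zero_or_pos n with rfl | hn
      · rw [hc0]; simp; positivity
      · calc ‖c n‖ * δ'^n ≤ r * (B*δ')^(n-1) := hkey n hn
          _ ≤ r * (1/4:ℝ)^(n-1) := mul_le_mul_of_nonneg_left (hgeo4 _) hr0.le
          _ = (4*r) * (1/4:ℝ)^n := by
              have : (1/4:ℝ)^n = (1/4:ℝ)^(n-1) * (1/4:ℝ) := by
                rw [← pow_succ]; congr 1; omega
              rw [this]; ring
    · have := (tendsto_pow_atTop_nhds_zero_of_lt_one (by norm_num : (0:ℝ) ≤ 1/4)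
        (by norm_num : (1/4:ℝ) < 1)).const_mul (4*r)
      simpa using this
  -- ## pointwise facts about g
  have hterm_le : ∀ (x : ℂp), ‖x‖ ≤ δ' → ∀ n, ‖c n * x^n‖ ≤ r * (1/4:ℝ)^(n-1) := by
    intro x hx n
    rcases Nat.eq_zero_or_pos n with rfl | hn
    · rw [hc0]; simp; positivity
    · calc ‖c n * x^n‖ = ‖c n‖ * ‖x‖^n := by rw [norm_mul, norm_pow]
        _ ≤ ‖c n‖ * δ'^n := by
            apply mul_le_mul_of_nonneg_left (pow_le_pow_left₀ (norm_nonneg x) hx n)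
              (norm_nonneg _)
        _ ≤ r * (B*δ')^(n-1) := hkey n hn
        _ ≤ r * (1/4:ℝ)^(n-1) := mul_le_mul_of_nonneg_left (hgeo4 _) hr0.le
  have hxsum : ∀ (x : ℂp), ‖x‖ ≤ δ' → Summable fun n => ‖c n * x^n‖ := by
    intro x hx
    have hb2 : ∀ n : ℕ, r * (1/4:ℝ)^(n-1) ≤ (4*r) * (1/4:ℝ)^n := by
      intro n
      have h14 : (1/4:ℝ)^(n-1) ≤ 4 * (1/4:ℝ)^n := by
        rcases Nat.eq_zero_or_pos n with rfl | hn
        · norm_num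
        · have he : (1/4:ℝ)^n = (1/4:ℝ)^(n-1) * (1/4:ℝ) := by
            rw [← pow_succ]; congr 1; omega
          rw [he]; ring_nf; nlinarith [pow_nonneg (by norm_num : (0:ℝ) ≤ 1/4) (n-1)]
      calc r * (1/4:ℝ)^(n-1) ≤ r * (4 * (1/4:ℝ)^n) := mul_le_mul_of_nonneg_left h14 hr0.le
        _ = (4*r) * (1/4:ℝ)^n := by ring
    exact Summable.of_nonneg_of_le (fun n => norm_nonneg _)
      (fun n => le_trans (hterm_le x hx n) (hb2 n))
      ((summable_geometric_of_lt_one (by norm_num : (0:ℝ) ≤ 1/4)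
        (by norm_num : (1/4:ℝ) < 1)).mul_left (4*r))
  have hgle : ∀ (x : ℂp), ‖x‖ ≤ δ' → ‖evalPS1 c x‖ ≤ r := by
    intro x hx
    apply ultNormTsumLe _ hr0.le
    intro n
    calc ‖c n * x^n‖ ≤ r * (1/4:ℝ)^(n-1) := hterm_le x hx n
      _ ≤ r * 1 := mul_le_mul_of_nonneg_left
          (pow_le_one₀ (by norm_num) (by norm_num)) hr0.le
      _ = r := mul_one r
  -- ## summability of the double series
  have hFbound : ∀ (x y : ℂp), ‖x‖ ≤ δ' → ‖y‖ ≤ r → ∀ ij : ℕ × ℕ,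
      ‖a ij.1 ij.2 * x^ij.1 * y^ij.2‖ ≤ (C * (1/4:ℝ)^ij.1) * (1/4:ℝ)^ij.2 := by
    rintro x y hx hy ⟨i, j⟩
    have h1 : ‖a i j * x^i * y^j‖ ≤ (C/δ^(i+j)) * δ'^i * r^j := by
      rw [norm_mul, norm_mul, norm_pow, norm_pow]
      apply mul_le_mul
      · apply mul_le_mul (hCd i j) (pow_le_pow_left₀ (norm_nonneg x) hx i) (by positivity)
          (by positivity)
      · exact pow_le_pow_left₀ (norm_nonneg y) hy j
      · positivity
      · positivity
    refine le_trans h1 ?_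
    have e1 : (C/δ^(i+j)) * δ'^i * r^j = C * (δ'/δ)^i * (r/δ)^j := by
      rw [show ((δ'/δ):ℝ)^i = δ'^i/δ^i from div_pow _ _ _,
        show ((r/δ):ℝ)^j = r^j/δ^j from div_pow _ _ _, pow_add]
      field_simp
      try ring
    rw [e1]
    calc C * (δ'/δ)^i * (r/δ)^j ≤ C * (1/4:ℝ)^i * (1/4:ℝ)^j := by
          apply mul_le_mul
          · exact mul_le_mul_of_nonneg_left (pow_le_pow_left₀ (by positivity) hratio1 i) hC0.le
          · exact pow_le_pow_left₀ (by positivity) hratio2 j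
          · positivity
          · positivity
      _ = (C * (1/4:ℝ)^i) * (1/4:ℝ)^j := by ring
  have hFsum : ∀ (x y : ℂp), ‖x‖ ≤ δ' → ‖y‖ ≤ r →
      Summable (fun ij : ℕ × ℕ => a ij.1 ij.2 * x^ij.1 * y^ij.2) := by
    intro x y hx hy
    exact Summable.of_norm_bounded
      (sumgeom2NIFT (M := C) (θ := 1/4) hC0.le (by norm_num) (by norm_num))
      (hFbound x y hx hy)
  -- ## the power series solves the equation
  have hroot : ∀ (x : ℂp), ‖x‖ ≤ δ' → evalPS2 a x (evalPS1 c x) = 0 := by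
    intro x hx
    set e : (ℕ × ℕ) × ℕ → ℂp :=
      fun q => a q.1.1 q.1.2 * x^q.1.1 * (dANIFT c q.1.2 q.2 * x^q.2) with hedef
    -- norm bound for e
    have hebound : ∀ q : (ℕ × ℕ) × ℕ,
        ‖e q‖ ≤ ((C * (1/2:ℝ)^q.1.1) * (1/2:ℝ)^q.1.2) * (1/2:ℝ)^q.2 := by
      rintro ⟨⟨i, j⟩, n⟩
      rcases Nat.lt_or_ge n j with hnj | hjn
      · have : e ((i,j),n) = 0 := by
          simp only [hedef]
          rw [dANIFT_eq_zero c hc0 j n hnj, zero_mul, mul_zero]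
        rw [this, norm_zero]; positivity
      · have hd : ‖dANIFT c j n‖ ≤ A^j * B^(n-j) := by
          apply dANIFT_norm_le c hc0 hA0.le hB0.le j n hjn
          intro k hk _
          exact hcb k hk
        have h1 : ‖e ((i,j),n)‖ ≤ (C/δ^(i+j)) * δ'^i * (A^j * B^(n-j)) * δ'^n := by
          simp only [hedef]
          rw [norm_mul, norm_mul, norm_mul, norm_pow, norm_pow]
          have t1 : ‖a i j‖ * ‖x‖^i ≤ (C/δ^(i+j)) * δ'^i :=
            mul_le_mul (hCd i j) (pow_le_pow_left₀ (norm_nonneg x) hx i) (by positivity)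
              (by positivity)
          have t2 : ‖dANIFT c j n‖ * ‖x‖^n ≤ (A^j * B^(n-j)) * δ'^n :=
            mul_le_mul hd (pow_le_pow_left₀ (norm_nonneg x) hx n) (by positivity)
              (by positivity)
          calc ‖a i j‖ * ‖x‖^i * (‖dANIFT c j n‖ * ‖x‖^n)
              ≤ ((C/δ^(i+j)) * δ'^i) * ((A^j * B^(n-j)) * δ'^n) :=
                mul_le_mul t1 t2 (by positivity) (by positivity)
            _ = (C/δ^(i+j)) * δ'^i * (A^j * B^(n-j)) * δ'^n := by ring
        refine le_trans h1 ?_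
        have e2 : (C/δ^(i+j)) * δ'^i * (A^j * B^(n-j)) * δ'^n
            = C * (δ'/δ)^i * ((A*δ')/δ)^j * (B*δ')^(n-j) := by
          have en : δ'^n = δ'^j * δ'^(n-j) := by rw [← pow_add]; congr 1; omega
          rw [en,
            show ((δ'/δ):ℝ)^i = δ'^i/δ^i from div_pow _ _ _,
            show (((A*δ')/δ):ℝ)^j = A^j*δ'^j/δ^j by rw [div_pow, mul_pow],
            show ((B*δ'):ℝ)^(n-j) = B^(n-j)*δ'^(n-j) from mul_pow _ _ _,
            pow_add]
          field_simp
          try ring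
        rw [e2]
        have s1 : (δ'/δ : ℝ) ≤ 1/4 := hratio1
        have s2 : ((A*δ')/δ : ℝ) ≤ 1/4 := by
          rw [div_le_div_iff₀ hδ (by norm_num)]; linarith
        have s3 : (B*δ' : ℝ) ≤ 1/4 := hBδ'
        have step1 : C * (δ'/δ)^i * ((A*δ')/δ)^j * (B*δ')^(n-j)
            ≤ C * (1/4:ℝ)^i * (1/4:ℝ)^j * (1/4:ℝ)^(n-j) := by
          apply mul_le_mul
          · apply mul_le_mul
            · exact mul_le_mul_of_nonneg_left (pow_le_pow_left₀ (by positivity) s1 i) hC0.le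
            · exact pow_le_pow_left₀ (by positivity) s2 j
            · positivity
            · positivity
          · exact pow_le_pow_left₀ (by positivity) s3 (n-j)
          · positivity
          · positivity
        refine le_trans step1 ?_
        have e3 : C * (1/4:ℝ)^i * (1/4:ℝ)^j * (1/4:ℝ)^(n-j) = C * (1/4:ℝ)^i * (1/4:ℝ)^n := by
          rw [mul_assoc (C * (1/4:ℝ)^i), ← pow_add]
          congr 2
          omega
        rw [e3]
        have e4 : (1/4:ℝ)^i ≤ (1/2:ℝ)^i := pow_le_pow_left₀ (by norm_num) (by norm_num) i
        have e5 : (1/4:ℝ)^n = (1/2:ℝ)^n * (1/2:ℝ)^n := by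
          rw [← mul_pow]; norm_num
        have e6 : (1/2:ℝ)^n ≤ (1/2:ℝ)^j :=
          pow_le_pow_of_le_one (by norm_num) (by norm_num) hjn
        calc C * (1/4:ℝ)^i * (1/4:ℝ)^n
            = C * (1/4:ℝ)^i * ((1/2:ℝ)^n * (1/2:ℝ)^n) := by rw [e5]
          _ ≤ C * (1/2:ℝ)^i * ((1/2:ℝ)^j * (1/2:ℝ)^n) := by
              apply mul_le_mul
              · exact mul_le_mul_of_nonneg_left e4 hC0.le
              · exact mul_le_mul_of_nonneg_right e6 (by positivity)
              · positivity
              · positivity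
          _ = ((C * (1/2:ℝ)^i) * (1/2:ℝ)^j) * (1/2:ℝ)^n := by ring
    have hesum : Summable e :=
      Summable.of_norm_bounded
        (sumgeom3NIFT (M := C) (θ := 1/2) hC0.le (by norm_num) (by norm_num)) hebound
    -- each fiber over the total degree sums to zero
    have hfiber : ∀ m : ℕ,
        (∑' q : ((fun q : (ℕ × ℕ) × ℕ => q.1.1 + q.2) ⁻¹' {m}), e q) = 0 := by
      intro m
      rw [tsum_subtype]
      rw [tsum_eq_sum (s := (Finset.range (m+1) ×ˢ Finset.range (m+1)) ×ˢ Finset.range (m+1))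
        (by
          rintro ⟨⟨i, j⟩, n⟩ hq
          by_cases hm : i + n = m
          · have hin : i ≤ m ∧ n ≤ m := by omega
            have hj : ¬ j < m + 1 := by
              intro hj
              exact hq (by
                simp only [Finset.mem_product, Finset.mem_range]
                exact ⟨⟨by omega, hj⟩, by omega⟩)
            have hjn : n < j := by omega
            have he0 : e ((i,j),n) = 0 := by
              simp only [hedef]
              rw [dANIFT_eq_zero c hc0 j n hjn, zero_mul, mul_zero]
            rw [Set.indicator_apply]
            split_ifs
            · exact he0
            · rfl
          · rw [Set.indicator_apply, if_neg]
            simp only [Set.mem_preimage, Set.mem_singleton_iff]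
            exact hm)]
      rw [Finset.sum_product]
      have hinner : ∀ ij ∈ Finset.range (m+1) ×ˢ Finset.range (m+1),
          (∑ n ∈ Finset.range (m+1),
            Set.indicator ((fun q : (ℕ × ℕ) × ℕ => q.1.1 + q.2) ⁻¹' {m}) e (ij, n))
          = (a ij.1 ij.2 * dANIFT c ij.2 (m - ij.1)) * x^m := by
        rintro ⟨i, j⟩ hij
        have hi : i ≤ m := by
          simp only [Finset.mem_product, Finset.mem_range] at hij
          omega
        rw [Finset.sum_eq_single (m - i)]
        · rw [Set.indicator_apply, if_pos (by
            simp only [Set.mem_preimage, Set.mem_singleton_iff]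
            omega)]
          simp only [hedef]
          have : x^i * x^(m-i) = x^m := by rw [← pow_add]; congr 1; omega
          calc a i j * x^i * (dANIFT c j (m-i) * x^(m-i))
              = (a i j * dANIFT c j (m-i)) * (x^i * x^(m-i)) := by ring
            _ = (a i j * dANIFT c j (m-i)) * x^m := by rw [this]
        · intro n _ hne
          rw [Set.indicator_apply, if_neg]
          simp only [Set.mem_preimage, Set.mem_singleton_iff]
          omega
        · intro hmem
          exact absurd (Finset.mem_range.mpr (by omega)) hmem
      rw [Finset.sum_congr rfl hinner, ← Finset.sum_mul, ccNIFT_spec a h00 hb m, zero_mul]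
    -- conclude that the total sum is zero
    have hhs := hesum.hasSum.tsum_fiberwise (fun q : (ℕ × ℕ) × ℕ => q.1.1 + q.2)
    rw [show (fun m => ∑' q : ((fun q : (ℕ × ℕ) × ℕ => q.1.1 + q.2) ⁻¹' {m}), e q)
        = (fun _ : ℕ => (0:ℂp)) from funext hfiber] at hhs
    have htot : (∑' q, e q) = 0 := hhs.unique hasSum_zero
    -- identify the total sum with the evaluation
    have hident : evalPS2 a x (evalPS1 c x) = ∑' q, e q := by
      rw [Summable.tsum_prod' hesum (fun ij => hesum.prod_factor ij)]
      simp only [evalPS2]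
      apply tsum_congr
      intro ij
      have hpow := (dANIFT_eval c x (hxsum x hx) ij.2).2
      calc a ij.1 ij.2 * x^ij.1 * (evalPS1 c x)^ij.2
          = a ij.1 ij.2 * x^ij.1 * (∑' n, dANIFT c ij.2 n * x^n) := by
            rw [hpow]; rfl
        _ = ∑' n, a ij.1 ij.2 * x^ij.1 * (dANIFT c ij.2 n * x^n) := (tsum_mul_left).symm
    rw [hident, htot]
  -- ## uniqueness of the root
  have huniq : ∀ (x y₁ y₂ : ℂp), ‖x‖ ≤ δ' → ‖y₁‖ ≤ r → ‖y₂‖ ≤ r →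
      evalPS2 a x y₁ = evalPS2 a x y₂ → y₁ = y₂ := by
    intro x y₁ y₂ hx hy₁ hy₂ heq
    by_contra hne
    have hΔ : y₁ - y₂ ≠ 0 := sub_ne_zero.mpr hne
    have hΔ0 : 0 < ‖y₁ - y₂‖ := norm_pos_iff.mpr hΔ
    set f : ℕ × ℕ → ℂp :=
      fun ij => a ij.1 ij.2 * x^ij.1 * (y₁^ij.2 - y₂^ij.2) with hfdef
    have hfsum : Summable f := by
      have := (hFsum x y₁ hx hy₁).sub (hFsum x y₂ hx hy₂)
      apply Summable.congr this
      rintro ⟨i, j⟩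
      simp only [hfdef]
      ring
    have hftot : (∑' ij, f ij) = 0 := by
      have := Summable.tsum_sub (hFsum x y₁ hx hy₁) (hFsum x y₂ hx hy₂)
      have h2 : (∑' ij : ℕ × ℕ, (a ij.1 ij.2 * x^ij.1 * y₁^ij.2
          - a ij.1 ij.2 * x^ij.1 * y₂^ij.2)) = 0 := by
        rw [this]
        show evalPS2 a x y₁ - evalPS2 a x y₂ = 0
        rw [heq, sub_self]
      rw [← h2]
      apply tsum_congr
      rintro ⟨i, j⟩
      simp only [hfdef]
      ring
    have hsplit := Summable.tsum_eq_add_tsum_ite hfsum ((0,1) : ℕ × ℕ)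
    have hf01 : f (0,1) = a 0 1 * (y₁ - y₂) := by
      simp only [hfdef]
      simp
    -- bound the remainder
    have hrem : ‖∑' ij : ℕ × ℕ, (if ij = ((0,1) : ℕ × ℕ) then 0 else f ij)‖
        ≤ (β/2) * ‖y₁ - y₂‖ := by
      apply ultNormTsumLe _ (by positivity)
      rintro ⟨i, j⟩
      by_cases hij : ((i,j) : ℕ × ℕ) = (0,1)
      · rw [if_pos hij, norm_zero]; positivity
      · rw [if_neg hij]
        rcases Nat.eq_zero_or_pos j with rfl | hj
        · have : f (i, 0) = 0 := by
            simp only [hfdef]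
            simp
          rw [this, norm_zero]; positivity
        · have hij2 : 2 ≤ i + j := by
            rcases Nat.eq_zero_or_pos i with rfl | hi
            · have : j ≠ 1 := fun h => hij (by rw [h])
              omega
            · omega
          -- factor the difference of powers
          have hfactor : y₁^j - y₂^j
              = (∑ k ∈ Finset.range j, y₁^k * y₂^(j-1-k)) * (y₁ - y₂) :=
            (geom_sum₂_mul y₁ y₂ j).symm
          have hgeom : ‖∑ k ∈ Finset.range j, y₁^k * y₂^(j-1-k)‖ ≤ r^(j-1) := by
            apply IsUltrametricDist.norm_sum_le_of_forall_le_of_nonneg (by positivity)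
            intro k hk
            have hk' : k < j := Finset.mem_range.mp hk
            rw [norm_mul, norm_pow, norm_pow]
            calc ‖y₁‖^k * ‖y₂‖^(j-1-k) ≤ r^k * r^(j-1-k) := by
                  apply mul_le_mul (pow_le_pow_left₀ (norm_nonneg _) hy₁ k)
                    (pow_le_pow_left₀ (norm_nonneg _) hy₂ _) (by positivity) (by positivity)
              _ = r^(j-1) := by rw [← pow_add]; congr 1; omega
          have hterm : ‖f (i, j)‖ ≤ (C/δ^(i+j)) * δ'^i * r^(j-1) * ‖y₁ - y₂‖ := by
            simp only [hfdef]
            rw [hfactor, norm_mul, norm_mul, norm_mul, norm_pow]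
            have t1 : ‖a i j‖ * ‖x‖^i ≤ (C/δ^(i+j)) * δ'^i :=
              mul_le_mul (hCd i j) (pow_le_pow_left₀ (norm_nonneg x) hx i) (by positivity)
                (by positivity)
            calc ‖a i j‖ * ‖x‖^i * (‖∑ k ∈ Finset.range j, y₁^k * y₂^(j-1-k)‖ * ‖y₁ - y₂‖)
                ≤ ((C/δ^(i+j)) * δ'^i) * (r^(j-1) * ‖y₁ - y₂‖) := by
                  apply mul_le_mul t1 (mul_le_mul_of_nonneg_right hgeom (norm_nonneg _))
                    (by positivity) (by positivity)
              _ = (C/δ^(i+j)) * δ'^i * r^(j-1) * ‖y₁ - y₂‖ := by ring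
          refine le_trans hterm ?_
          apply mul_le_mul_of_nonneg_right _ (norm_nonneg _)
          -- (C/δ^(i+j)) * δ'^i * r^(j-1) ≤ β/2
          have step1 : (C/δ^(i+j)) * δ'^i * r^(j-1) ≤ (C/δ^(i+j)) * r^i * r^(j-1) := by
            apply mul_le_mul_of_nonneg_right _ (by positivity)
            apply mul_le_mul_of_nonneg_left (pow_le_pow_left₀ hδ'0.le hδ'r i) (by positivity)
          refine le_trans step1 ?_
          have e1 : (C/δ^(i+j)) * r^i * r^(j-1) = (C*r/δ^2) * (r/δ)^(i+j-2) := by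
            have er : r^i * r^(j-1) = r * r^(i+j-2) := by
              rw [← pow_add, ← pow_succ']; congr 1; omega
            have ed : δ^(i+j) = δ^2 * δ^(i+j-2) := by
              rw [← pow_add]; congr 1; omega
            rw [div_pow]
            rw [mul_assoc, er, ed]
            field_simp
          rw [e1]
          have h2 : C*r/δ^2 ≤ β/2 := by
            rw [div_le_div_iff₀ (by positivity) (by norm_num)]
            calc C*r*2 = 2 * (C * r) := by ring
              _ ≤ 2 * (β*δ^2/2) := by linarith
              _ = β * δ^2 := by ring
          have h3 : (r/δ : ℝ)^(i+j-2) ≤ 1 := by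
            apply pow_le_one₀ (by positivity)
            calc r/δ ≤ 1/4 := hratio2
              _ ≤ 1 := by norm_num
          calc (C*r/δ^2) * (r/δ)^(i+j-2) ≤ (β/2) * 1 :=
                mul_le_mul h2 h3 (by positivity) (by positivity)
            _ = β/2 := mul_one _
    -- contradiction
    have hbΔ : ‖a 0 1 * (y₁ - y₂)‖ = β * ‖y₁ - y₂‖ := by rw [norm_mul]
    have : a 0 1 * (y₁ - y₂)
        = -∑' ij : ℕ × ℕ, (if ij = ((0,1) : ℕ × ℕ) then 0 else f ij) := by
      rw [← hf01]
      have := hsplit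
      rw [hftot] at this
      linear_combination -this
    have hcontr : β * ‖y₁ - y₂‖ ≤ (β/2) * ‖y₁ - y₂‖ := by
      rw [← hbΔ, this, norm_neg]
      exact hrem
    nlinarith
  -- ## conclusion
  refine ⟨δ', hδ'0, hδ'δ, c, htendsto, hc0, ?_⟩
  intro x y hx hy
  constructor
  · intro hFy
    apply huniq x y (evalPS1 c x) hx (le_trans hy hδ'r) (hgle x hx)
    rw [hFy, hroot x hx]
  · rintro rfl
    exact hroot x hx
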